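/- Assume in addition that p is odd, δ > 0 and β > −1. Let u be twice differentiable on [x₀, x₁) ⊆ (0, 1) and satisfy the example equation there, and set H(x) := (1 − x²)·u'(x)²/2 − γ·u(x)²/2 + (δ/(p+1))·u(x)^{p+1}. Then the infimum V := inf_{w ∈ ℝ} [ (δ/(p+1))·w^{p+1} − (γ/2)·w² ] is finite, H(x) ≤ H(x₀) for all x ∈ [x₀, x₁), and consequently (1 − x²)·u'(x)² ≤ 2(H(x₀) − V) for all x ∈ [x₀, x₁). -/

import Mathlib

set_option autoImplicit false

open Real Set

/-- The Lyapunov function for the example equation. -/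
noncomputable def exampleH (p : ℕ) (γ δ : ℝ) (u : ℝ → ℝ) (x : ℝ) : ℝ :=
  (1 - x ^ 2) * (deriv u x) ^ 2 / 2 - γ * (u x) ^ 2 / 2
    + δ / ((p : ℝ) + 1) * u x ^ (p + 1)

/-- Lower bound for `a t^k - b t` on `t ≥ 0` when `a > 0`, `k ≥ 2`. -/
theorem exampleH_pot_lb (a b : ℝ) (ha : 0 < a) (k : ℕ) (hk : 2 ≤ k) :
    ∀ t : ℝ, 0 ≤ t → -(|b|) * (|b|/a + 1) ≤ a * t ^ k - b * t := by
  intro t ht0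
  set T := |b|/a + 1 with hT
  have hT1 : (1:ℝ) ≤ T := by
    have h0 : 0 ≤ |b|/a := by positivity
    rw [hT]; linarith
  rcases le_or_gt t T with h | h
  · have h1 : b * t ≤ |b| * T := by
      calc b * t ≤ |b| * t := by nlinarith [le_abs_self b]
      _ ≤ |b| * T := by nlinarith [abs_nonneg b]
    nlinarith [mul_nonneg ha.le (pow_nonneg ht0 k)]
  · have ht1 : (1:ℝ) ≤ t := le_trans hT1 h.le
    have h2 : t ^ 2 ≤ t ^ k := pow_le_pow_right₀ ht1 hk
    have haT : a * T = |b| + a := by rw [hT]; field_simp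
    have h3 : a * T ≤ a * t := by nlinarith
    have h4 : 0 ≤ t * (a * t - b) := mul_nonneg ht0 (by nlinarith [le_abs_self b])
    nlinarith [mul_le_mul_of_nonneg_left h2 ha.le,
      mul_nonneg (abs_nonneg b) (show (0:ℝ) ≤ T by linarith)]

/-- For odd `p`, `δ > 0`, `β > -1`, along a twice differentiable solution of
the example equation on `[x₀, x₁) ⊆ (0,1)`, the potential
`V = inf_w (δ/(p+1) w^{p+1} - (γ/2) w²)` is finite, `H(x) ≤ H(x₀)`, and
`(1-x²) u'(x)² ≤ 2(H(x₀) - V)` on `[x₀, x₁)`. -/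
theorem exampleEquation_lyapunov_bound
    (p : ℕ) (hp : 1 < p) (α β γ δ : ℝ) (hα : 0 < α) (hδ : 0 < δ)
    (hodd : Odd p) (hβ : -1 < β)
    (x₀ x₁ : ℝ) (hx : Ico x₀ x₁ ⊆ Ioo (0 : ℝ) 1)
    (u : ℝ → ℝ)
    (hdiff : ∀ x ∈ Ico x₀ x₁, DifferentiableAt ℝ u x)
    (hdiff2 : ∀ x ∈ Ico x₀ x₁, DifferentiableAt ℝ (deriv u) x)
    (heq : ∀ x ∈ Ico x₀ x₁,
      (1 - x ^ 2) * deriv (deriv u) x + (α / x + β * x) * deriv u x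
        - γ * u x + δ * u x ^ p = 0) :
    BddBelow (Set.range fun w : ℝ => δ / ((p : ℝ) + 1) * w ^ (p + 1) - γ / 2 * w ^ 2) ∧
    (∀ x ∈ Ico x₀ x₁, exampleH p γ δ u x ≤ exampleH p γ δ u x₀) ∧
    ∀ x ∈ Ico x₀ x₁,
      (1 - x ^ 2) * (deriv u x) ^ 2
        ≤ 2 * (exampleH p γ δ u x₀
            - sInf (Set.range fun w : ℝ => δ / ((p : ℝ) + 1) * w ^ (p + 1) - γ / 2 * w ^ 2)) := by
  obtain ⟨m, hm⟩ := hodd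
  have hm1 : 1 ≤ m := by omega
  have hcpos : (0:ℝ) < (p:ℝ) + 1 := by positivity
  have ha : 0 < δ / ((p:ℝ) + 1) := by positivity
  -- Part 1: bounded below
  have hbdd : BddBelow (Set.range fun w : ℝ =>
      δ / ((p : ℝ) + 1) * w ^ (p + 1) - γ / 2 * w ^ 2) := by
    refine ⟨-(|γ/2|) * (|γ/2| / (δ / ((p:ℝ) + 1)) + 1), ?_⟩
    rintro y ⟨w, rfl⟩
    have hpe : p + 1 = 2 * (m + 1) := by omega
    have hk : 2 ≤ m + 1 := by omega
    have := exampleH_pot_lb (δ / ((p:ℝ) + 1)) (γ/2) ha (m+1) hk (w^2) (sq_nonneg w)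
    calc -(|γ/2|) * (|γ/2| / (δ / ((p:ℝ) + 1)) + 1)
        ≤ δ / ((p:ℝ) + 1) * (w^2) ^ (m+1) - γ/2 * w^2 := this
      _ = δ / ((p:ℝ) + 1) * w ^ (p+1) - γ/2 * w^2 := by
          rw [hpe, pow_mul]
  -- Derivative of H
  have key : ∀ x ∈ Ico x₀ x₁, HasDerivAt (exampleH p γ δ u)
      (-((1 + β) * x + α / x) * (deriv u x) ^ 2) x := by
    intro x hx'
    have hx01 : x ∈ Ioo (0:ℝ) 1 := hx hx'
    have hxne : x ≠ 0 := ne_of_gt hx01.1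
    have hc : ((p:ℝ) + 1) ≠ 0 := ne_of_gt hcpos
    have hu' : HasDerivAt u (deriv u x) x := (hdiff x hx').hasDerivAt
    have hu'' : HasDerivAt (deriv u) (deriv (deriv u) x) x := (hdiff2 x hx').hasDerivAt
    have h1 : HasDerivAt (fun y : ℝ => 1 - y ^ 2) (-(2 * x ^ 1)) x :=
      (hasDerivAt_pow 2 x).const_sub 1
    have h2 : HasDerivAt (fun y => (deriv u y) ^ 2)
        ((2 : ℕ) * deriv u x ^ 1 * deriv (deriv u) x) x := hu''.pow 2
    have hA : HasDerivAt (fun y => (1 - y ^ 2) * (deriv u y) ^ 2 / 2)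
        ((-(2 * x ^ 1) * (deriv u x) ^ 2
          + (1 - x ^ 2) * ((2:ℕ) * deriv u x ^ 1 * deriv (deriv u) x)) / 2) x :=
      (h1.mul h2).div_const 2
    have hB : HasDerivAt (fun y => γ * (u y) ^ 2 / 2)
        (γ * ((2:ℕ) * u x ^ 1 * deriv u x) / 2) x :=
      ((hu'.pow 2).const_mul γ).div_const 2
    have hC : HasDerivAt (fun y => δ / ((p:ℝ) + 1) * u y ^ (p + 1))
        (δ * u x ^ p * deriv u x) x := by
      have : HasDerivAt (fun y => δ / ((p:ℝ) + 1) * u y ^ (p + 1))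
          (δ / ((p:ℝ) + 1) * (((p + 1 : ℕ) : ℝ) * u x ^ (p + 1 - 1) * deriv u x)) x :=
        (hu'.pow (p + 1)).const_mul (δ / ((p:ℝ) + 1))
      convert this using 1
      rw [Nat.add_sub_cancel]
      push_cast
      field_simp
    have hH := (hA.sub hB).add hC
    have hfun : exampleH p γ δ u = fun y => (1 - y ^ 2) * (deriv u y) ^ 2 / 2
        - γ * (u y) ^ 2 / 2 + δ / ((p:ℝ) + 1) * u y ^ (p + 1) := rfl
    rw [hfun]
    refine hH.congr_deriv (Eq.symm ?_)
    linear_combination (-(deriv u x)) * heq x hx'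
  -- Part 2: H is antitone on the interval
  have hanti : AntitoneOn (exampleH p γ δ u) (Ico x₀ x₁) := by
    apply antitoneOn_of_deriv_nonpos (convex_Ico x₀ x₁)
    · intro x hx'
      exact ((key x hx').differentiableAt).continuousAt.continuousWithinAt
    · intro x hx'
      rw [interior_Ico] at hx'
      exact ((key x (Ioo_subset_Ico_self hx')).differentiableAt).differentiableWithinAt
    · intro x hx'
      rw [interior_Ico] at hx'
      have hx'' : x ∈ Ico x₀ x₁ := Ioo_subset_Ico_self hx'
      rw [(key x hx'').deriv]
      have hx01 : x ∈ Ioo (0:ℝ) 1 := hx hx''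
      have h1 : 0 < (1 + β) * x + α / x := by
        have := hx01.1
        have h2 : 0 < (1 + β) * x := by nlinarith
        have h3 : 0 < α / x := by positivity
        linarith
      exact mul_nonpos_of_nonpos_of_nonneg (by linarith) (sq_nonneg _)
  have hmono : ∀ x ∈ Ico x₀ x₁, exampleH p γ δ u x ≤ exampleH p γ δ u x₀ := by
    intro x hx'
    have hx0 : x₀ ∈ Ico x₀ x₁ := ⟨le_refl _, lt_of_le_of_lt hx'.1 hx'.2⟩
    exact hanti hx0 hx' hx'.1
  refine ⟨hbdd, hmono, ?_⟩
  -- Part 3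
  intro x hx'
  have hV : sInf (Set.range fun w : ℝ => δ / ((p : ℝ) + 1) * w ^ (p + 1) - γ / 2 * w ^ 2)
      ≤ δ / ((p : ℝ) + 1) * (u x) ^ (p + 1) - γ / 2 * (u x) ^ 2 :=
    csInf_le hbdd ⟨u x, rfl⟩
  have hfx : exampleH p γ δ u x = (1 - x ^ 2) * (deriv u x) ^ 2 / 2
      + (δ / ((p:ℝ) + 1) * (u x) ^ (p + 1) - γ / 2 * (u x) ^ 2) := by
    simp only [exampleH]; ring
  have hHx := hmono x hx'
  linarith
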